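/- Let M, N ≥ 0 and let H be the (M+N+1)×(M+N+1) complex tridiagonal matrix with rows and columns indexed by k ∈ {−M,…,N}, with H_{k,k} = a_k, H_{k,k+1} = b_k and H_{k+1,k} = c_{k+1} for −M ≤ k ≤ N−1, and all other entries zero. Fix z ∈ ℂ and suppose both continued-fraction recurrences are well defined: f_{−M−1}(z)=0 and f_{−j}(z) = 1/(a_{−j} − z − c_{−j} f_{−j−1}(z) b_{−j−1}) for j = M,…,1, and f_{N+1}(z)=0 and f_k(z) = 1/(a_k − z − b_k f_{k+1}(z) c_{k+1}) for k = N,…,1, with all these denominators nonzero. Define D_0(z) = a_0 − z − c_0 f_{−1}(z) b_{−1} − b_0 f_1(z) c_1. Then det(H − zI) = D_0(z) · ∏_{j=1}^{M} (1/f_{−j}(z)) · ∏_{k=1}^{N} (1/f_k(z)). -/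

import Mathlib

open Matrix BigOperators

/-- The `(M+N+1) × (M+N+1)` complex tridiagonal matrix whose rows and columns are
indexed by `k ∈ {-M, ..., N}` (the 0-based row `i` corresponds to `k = i - M`), with
diagonal entries `a k`, superdiagonal entries `H_{k,k+1} = b k` and subdiagonal entries
`H_{k+1,k} = c (k+1)`, all other entries zero. -/
def tridZ (M N : ℕ) (a b c : ℤ → ℂ) : Matrix (Fin (M + N + 1)) (Fin (M + N + 1)) ℂ :=
  Matrix.of fun i j =>
    if ((i : ℕ) : ℤ) = ((j : ℕ) : ℤ) then a (((i : ℕ) : ℤ) - (M : ℤ))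
    else if ((j : ℕ) : ℤ) = ((i : ℕ) : ℤ) + 1 then b (((i : ℕ) : ℤ) - (M : ℤ))
    else if ((i : ℕ) : ℤ) = ((j : ℕ) : ℤ) + 1 then c (((i : ℕ) : ℤ) - (M : ℤ))
    else 0

lemma one_apply_int {n : ℕ} (i j : Fin n) :
    (1 : Matrix (Fin n) (Fin n) ℂ) i j = if ((i : ℕ) : ℤ) = ((j : ℕ) : ℤ) then 1 else 0 := by
  rw [Matrix.one_apply]; congr 1; simp [Fin.ext_iff]

lemma tridZ_congr (N : ℕ) (a a' b c : ℤ → ℂ) (h : ∀ k : ℤ, 0 ≤ k → a k = a' k) :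
    tridZ 0 N a b c = tridZ 0 N a' b c := by
  ext i j
  simp only [tridZ, Matrix.of_apply]
  split_ifs <;> first | exact h _ (by omega) | rfl

lemma tridZ_base (a b c : ℤ → ℂ) (z : ℂ) :
    (tridZ 0 0 a b c - z • (1 : Matrix (Fin 1) (Fin 1) ℂ)).det = a 0 - z := by
  rw [Matrix.det_fin_one]
  simp [tridZ]

lemma tridZ_rev (M N : ℕ) (a b c : ℤ → ℂ) (z : ℂ) :
    (tridZ M N a b c - z • (1 : Matrix (Fin (M + N + 1)) (Fin (M + N + 1)) ℂ)).det =
    (tridZ N M (fun k => a (-k)) (fun k => c (-k)) (fun k => b (-k)) -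
      z • (1 : Matrix (Fin (N + M + 1)) (Fin (N + M + 1)) ℂ)).det := by
  rw [← Matrix.det_submatrix_equiv_self
    ((finCongr (show N + M + 1 = M + N + 1 by omega)).trans Fin.revPerm)]
  congr 1
  ext i j
  have hI : ((i : ℕ) : ℤ) ≤ (N:ℤ) + M := by omega
  have hJ : ((j : ℕ) : ℤ) ≤ (N:ℤ) + M := by omega
  have hi : ((((finCongr (show N + M + 1 = M + N + 1 by omega)).trans Fin.revPerm) i : ℕ) : ℤ)
      = (M : ℤ) + N - (i : ℕ) := by
    simp [Fin.val_rev, finCongr]; omega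
  have hj : ((((finCongr (show N + M + 1 = M + N + 1 by omega)).trans Fin.revPerm) j : ℕ) : ℤ)
      = (M : ℤ) + N - (j : ℕ) := by
    simp [Fin.val_rev, finCongr]; omega
  simp only [Matrix.submatrix_apply, Matrix.sub_apply, Matrix.smul_apply, smul_eq_mul,
    one_apply_int, tridZ, Matrix.of_apply, hi, hj]
  clear hi hj
  have h1 : ((M : ℤ) + N - (i : ℕ)) - M = -(((i:ℕ):ℤ) - N) := by ring
  rw [h1]
  split_ifs <;> first | rfl | (exfalso; omega)
lemma tridZ_step (M N : ℕ) (a b c : ℤ → ℂ) (z : ℂ) (hd : a (-(M:ℤ)-1) - z ≠ 0) :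
    (tridZ (M+1) N a b c - z • (1 : Matrix (Fin (M+1+N+1)) (Fin (M+1+N+1)) ℂ)).det =
      (a (-(M:ℤ)-1) - z) *
      (tridZ M N (fun k => if k = -(M:ℤ) then
          a (-(M:ℤ)) - c (-(M:ℤ)) * (a (-(M:ℤ)-1) - z)⁻¹ * b (-(M:ℤ)-1) else a k) b c
        - z • (1 : Matrix (Fin (M+N+1)) (Fin (M+N+1)) ℂ)).det := by
  set A := tridZ (M+1) N a b c - z • (1 : Matrix (Fin (M+1+N+1)) (Fin (M+1+N+1)) ℂ) with hA
  have h1 : (1 : ℕ) < M+1+N+1 := by omega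
  have hne : (⟨1, h1⟩ : Fin (M+1+N+1)) ≠ 0 := by simp [Fin.ext_iff]
  rw [← Matrix.det_updateRow_add_smul_self A hne (-(c (-(M:ℤ)) * (a (-(M:ℤ)-1) - z)⁻¹))]
  set B := A.updateRow ⟨1, h1⟩ (A ⟨1, h1⟩ + (-(c (-(M:ℤ)) * (a (-(M:ℤ)-1) - z)⁻¹)) • A 0) with hB
  rw [Matrix.det_succ_column_zero B]
  rw [Finset.sum_eq_single 0]
  · rw [Fin.succAbove_zero]
    have hB00 : B 0 0 = a (-(M:ℤ)-1) - z := by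
      rw [hB, Matrix.updateRow_ne (Ne.symm hne)]
      simp only [hA, Matrix.sub_apply, Matrix.smul_apply, one_apply_int, tridZ,
        Matrix.of_apply, Fin.val_zero, if_pos rfl, smul_eq_mul]
      norm_num
      congr 1
      push_cast; ring
    rw [hB00]
    simp only [Fin.val_zero, pow_zero, one_mul]
    congr 1
    rw [← Matrix.det_submatrix_equiv_self (finCongr (show M+1+N = M+N+1 by omega))
      (tridZ M N _ b c - z • (1 : Matrix (Fin (M+N+1)) (Fin (M+N+1)) ℂ))]
    congr 1
    ext i j
    have hival : (((finCongr (show M+1+N = M+N+1 by omega)) i : ℕ)) = (i : ℕ) := rfl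
    have hjval : (((finCongr (show M+1+N = M+N+1 by omega)) j : ℕ)) = (j : ℕ) := rfl
    by_cases hi0 : (i : ℕ) = 0
    · have hsi : (i.succ : Fin (M+1+N+1)) = ⟨1, h1⟩ := by
        ext; simp [hi0]
      rw [Matrix.submatrix_apply, hB, hsi, Matrix.updateRow_self]
      rcases Nat.lt_or_ge (j : ℕ) 2 with hj2 | hj2
      · interval_cases hj : (j : ℕ)
        · -- j = 0 : corner entry
          have hsj : (j.succ : Fin (M+1+N+1)) = ⟨1, h1⟩ := by ext; simp [hj]
          rw [hsj]
          simp only [Matrix.submatrix_apply, hival, hjval, hA, Pi.add_apply, Pi.smul_apply,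
            Matrix.sub_apply, Matrix.smul_apply, one_apply_int, tridZ, Matrix.of_apply,
            Fin.val_zero, smul_eq_mul, hi0, hj]
          norm_num
          rw [show (-1:ℤ) + -(M:ℤ) = -(M:ℤ)-1 from by ring]
          ring
        · -- j = 1 : superdiagonal
          simp only [Matrix.submatrix_apply, hival, hjval, hA, Pi.add_apply, Pi.smul_apply,
            Matrix.sub_apply, Matrix.smul_apply, one_apply_int, tridZ, Matrix.of_apply,
            Fin.val_succ, Fin.val_zero, smul_eq_mul, hi0, hj]
          norm_num
      · -- j ≥ 2 : zero entries
        simp only [Matrix.submatrix_apply, hival, hjval, hA, Pi.add_apply, Pi.smul_apply,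
          Matrix.sub_apply, Matrix.smul_apply, one_apply_int, tridZ, Matrix.of_apply,
          Fin.val_succ, Fin.val_zero, smul_eq_mul, hi0]
        push_cast
        split_ifs <;> first | (exfalso; omega) | ring
    · -- i ≥ 1 : untouched rows
      have hsi : (i.succ : Fin (M+1+N+1)) ≠ ⟨1, h1⟩ := by
        intro hh
        have := congrArg Fin.val hh
        simp only [Fin.val_succ, Fin.val_mk] at this
        omega
      rw [Matrix.submatrix_apply, hB, Matrix.updateRow_ne hsi]
      simp only [Matrix.submatrix_apply, hival, hjval, hA, Matrix.sub_apply,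
        Matrix.smul_apply, one_apply_int, tridZ, Matrix.of_apply, Fin.val_succ, smul_eq_mul]
      push_cast
      split_ifs <;>
        first
          | rfl
          | (exfalso; omega)
          | (congr 2 <;> first | rfl | omega)
          | (congr 1 <;> first | rfl | omega | (congr 1 <;> first | rfl | omega))
  · intro i _ hi
    have hBi0 : B i 0 = 0 := by
      rcases eq_or_ne i ⟨1, h1⟩ with h | h
      · subst h
        simp only [hB, Matrix.updateRow_apply, if_pos rfl, hA, Matrix.sub_apply,
          Matrix.smul_apply, one_apply_int, tridZ, Matrix.of_apply, Pi.add_apply,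
          Pi.smul_apply, smul_eq_mul, Fin.val_zero]
        norm_num
        push_cast
        rw [show (-1:ℤ) + -(M:ℤ) = -(M:ℤ)-1 from by ring]
        field_simp
        ring
      · simp only [hB, Matrix.updateRow_apply, if_neg h, hA, Matrix.sub_apply,
          Matrix.smul_apply, one_apply_int, tridZ, Matrix.of_apply]
        have hv0 : (i : ℕ) ≠ 0 := fun hh => hi (Fin.ext (by simpa using hh))
        have hv1 : (i : ℕ) ≠ 1 := fun hh => h (Fin.ext (by simpa using hh))
        have h0v : ((0 : Fin (M+1+N+1)) : ℕ) = 0 := rfl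
        split_ifs <;> first | (exfalso; omega) | simp
    rw [hBi0]; ring
  · intro h; exact absurd (Finset.mem_univ 0) h
lemma tridZ_leftReduce (N : ℕ) (b c : ℤ → ℂ) (z : ℂ) :
    ∀ (M : ℕ) (a f : ℤ → ℂ),
    f (-(M:ℤ) - 1) = 0 →
    (∀ k : ℤ, -(M:ℤ) ≤ k → k ≤ -1 → a k - z - c k * f (k-1) * b (k-1) ≠ 0) →
    (∀ k : ℤ, -(M:ℤ) ≤ k → k ≤ -1 → f k = (a k - z - c k * f (k-1) * b (k-1))⁻¹) →
    (tridZ M N a b c - z • (1 : Matrix (Fin (M+N+1)) (Fin (M+N+1)) ℂ)).det =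
      (tridZ 0 N (fun k => if k = 0 then a 0 - c 0 * f (-1) * b (-1) else a k) b c
        - z • (1 : Matrix (Fin (0+N+1)) (Fin (0+N+1)) ℂ)).det *
      ∏ j ∈ Finset.Icc 1 M, (f (-(j:ℤ)))⁻¹ := by
  intro M
  induction M with
  | zero =>
    intro a f h0 _ _
    have h0' : f (-1) = 0 := by norm_num at h0; exact h0
    rw [tridZ_congr N a (fun k => if k = 0 then a 0 - c 0 * f (-1) * b (-1) else a k) b c
      (by intro k hk
          by_cases hk0 : k = 0
          · subst hk0; simp [h0']
          · simp [hk0])]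
    simp
  | succ M ih =>
    intro a f h0 hden hrec
    have h0' : f (-(M:ℤ) - 1 - 1) = 0 := by
      convert h0 using 2; push_cast; ring
    have hdenM : a (-(M:ℤ)-1) - z - c (-(M:ℤ)-1) * f (-(M:ℤ)-1-1) * b (-(M:ℤ)-1-1) ≠ 0 := by
      have := hden (-(M:ℤ)-1) (by push_cast; omega) (by omega)
      convert this using 3 <;> push_cast <;> ring
    have hd : a (-(M:ℤ)-1) - z ≠ 0 := by
      rwa [h0', mul_zero, zero_mul, sub_zero] at hdenM
    have hfM1 : f (-(M:ℤ)-1) = (a (-(M:ℤ)-1) - z)⁻¹ := by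
      have := hrec (-(M:ℤ)-1) (by push_cast; omega) (by omega)
      rwa [h0', mul_zero, zero_mul, sub_zero] at this
    rw [tridZ_step M N a b c z hd]
    set a' : ℤ → ℂ := fun k => if k = -(M:ℤ) then
        a (-(M:ℤ)) - c (-(M:ℤ)) * (a (-(M:ℤ)-1) - z)⁻¹ * b (-(M:ℤ)-1) else a k with ha'
    set f' : ℤ → ℂ := fun k => if k = -(M:ℤ)-1 then 0 else f k with hf'
    have h0'' : f' (-(M:ℤ) - 1) = 0 := by simp [hf']
    have hkey : ∀ k : ℤ, -(M:ℤ) ≤ k → k ≤ -1 →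
        a' k - z - c k * f' (k-1) * b (k-1) = a k - z - c k * f (k-1) * b (k-1) := by
      intro k hk1 hk2
      by_cases hkM : k = -(M:ℤ)
      · subst hkM
        simp only [ha', hf', if_pos rfl]
        rw [hfM1]
        ring
      · simp only [ha', hf', if_neg hkM, if_neg (show k - 1 ≠ -(M:ℤ)-1 by omega)]
    have hden' : ∀ k : ℤ, -(M:ℤ) ≤ k → k ≤ -1 →
        a' k - z - c k * f' (k-1) * b (k-1) ≠ 0 := by
      intro k hk1 hk2; rw [hkey k hk1 hk2]; exact hden k (by omega) hk2
    have hrec' : ∀ k : ℤ, -(M:ℤ) ≤ k → k ≤ -1 →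
        f' k = (a' k - z - c k * f' (k-1) * b (k-1))⁻¹ := by
      intro k hk1 hk2
      rw [hkey k hk1 hk2, show f' k = f k from by simp only [hf']; rw [if_neg (by omega)]]
      exact hrec k (by omega) hk2
    rw [ih a' f' h0'' hden' hrec']
    have hgg : (tridZ 0 N (fun k => if k = 0 then a' 0 - c 0 * f' (-1) * b (-1) else a' k) b c)
        = tridZ 0 N (fun k => if k = 0 then a 0 - c 0 * f (-1) * b (-1) else a k) b c := by
      apply tridZ_congr
      intro k hk
      by_cases hk0 : k = 0
      · subst hk0
        simp only [if_pos rfl]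
        by_cases hM : M = 0
        · subst hM
          have hfm : f (-1) = (a (-1) - z)⁻¹ := by simpa using hfM1
          have e1 : f' (-1) = 0 := by norm_num [hf']
          have e2 : a' 0 = a 0 - c 0 * (a (-1) - z)⁻¹ * b (-1) := by norm_num [ha']
          rw [e1, e2, hfm]; simp
        · rw [show a' 0 = a 0 from by simp only [ha']; rw [if_neg (by omega)],
            show f' (-1) = f (-1) from by simp only [hf']; rw [if_neg (by omega)]]
      · rw [if_neg hk0, if_neg hk0, show a' k = a k from by simp only [ha']; rw [if_neg (by omega)]]
    rw [hgg]
    have hprod : ∏ j ∈ Finset.Icc 1 M, (f' (-(j:ℤ)))⁻¹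
        = ∏ j ∈ Finset.Icc 1 M, (f (-(j:ℤ)))⁻¹ := by
      refine Finset.prod_congr rfl (fun j hj => ?_)
      have := Finset.mem_Icc.mp hj
      congr 1
      simp only [hf']
      rw [if_neg (by omega)]
    rw [hprod, Finset.prod_Icc_succ_top (by omega) (fun j : ℕ => (f (-(j:ℤ)))⁻¹)]
    have hlast : (f (-((M+1:ℕ):ℤ)))⁻¹ = a (-(M:ℤ)-1) - z := by
      rw [show -((M+1:ℕ):ℤ) = -(M:ℤ)-1 from by push_cast; ring, hfM1, inv_inv]
    rw [hlast]
    ring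

/-- if both continued-fraction recurrences (upward, for `k = -1, ..., -M`,
and downward, for `k = N, ..., 1`) are well defined at `z`, then
`det (H - z•1) = D₀(z) * ∏_{j=1}^M (1 / f (-j)) * ∏_{k=1}^N (1 / f k)`, where
`D₀(z) = a 0 - z - c 0 * f (-1) * b (-1) - b 0 * f 1 * c 1`. -/
theorem tridZ_det_two_continued_fractions
    (M N : ℕ) (a b c : ℤ → ℂ) (z : ℂ) (f : ℤ → ℂ)
    (hup0 : f (-(M : ℤ) - 1) = 0)
    (hupden : ∀ k : ℤ, -(M : ℤ) ≤ k → k ≤ -1 →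
      a k - z - c k * f (k - 1) * b (k - 1) ≠ 0)
    (hup : ∀ k : ℤ, -(M : ℤ) ≤ k → k ≤ -1 →
      f k = (a k - z - c k * f (k - 1) * b (k - 1))⁻¹)
    (hdown0 : f ((N : ℤ) + 1) = 0)
    (hdownden : ∀ k : ℤ, 1 ≤ k → k ≤ (N : ℤ) →
      a k - z - b k * f (k + 1) * c (k + 1) ≠ 0)
    (hdown : ∀ k : ℤ, 1 ≤ k → k ≤ (N : ℤ) →
      f k = (a k - z - b k * f (k + 1) * c (k + 1))⁻¹) :
    (tridZ M N a b c - z • (1 : Matrix (Fin (M + N + 1)) (Fin (M + N + 1)) ℂ)).det =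
      (a 0 - z - c 0 * f (-1) * b (-1) - b 0 * f 1 * c 1) *
        (∏ j ∈ Finset.Icc 1 M, (f (-(j : ℤ)))⁻¹) *
        (∏ k ∈ Finset.Icc 1 N, (f ((k : ℕ) : ℤ))⁻¹) := by
  have hmain := tridZ_leftReduce N b c z M a f hup0 hupden hup
  rw [hmain]
  have hrev := tridZ_rev 0 N (fun k => if k = 0 then a 0 - c 0 * f (-1) * b (-1) else a k) b c z
  rw [hrev]
  have h2 := tridZ_leftReduce 0 (fun k => c (-k)) (fun k => b (-k)) z N
    (fun k => (fun k' => if k' = 0 then a 0 - c 0 * f (-1) * b (-1) else a k') (-k))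
    (fun k => f (-k))
    (by
      show f (-(-(N:ℤ) - 1)) = 0
      rw [show -(-(N:ℤ) - 1) = (N:ℤ) + 1 from by ring]
      exact hdown0)
    (by
      intro k hk1 hk2
      simp only
      rw [if_neg (by omega), show -(k-1) = -k+1 from by ring]
      have := hdownden (-k) (by omega) (by omega)
      convert this using 3 <;> ring)
    (by
      intro k hk1 hk2
      simp only
      rw [if_neg (by omega), show -(k-1) = -k+1 from by ring]
      have := hdown (-k) (by omega) (by omega)
      convert this using 4 <;> ring)
  rw [h2]
  rw [tridZ_base]
  simp only [if_pos rfl, neg_zero]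
  have hprodN : ∏ j ∈ Finset.Icc 1 N, (f (-(-(j:ℕ):ℤ)))⁻¹
      = ∏ k ∈ Finset.Icc 1 N, (f ((k:ℕ):ℤ))⁻¹ := by
    refine Finset.prod_congr rfl (fun j hj => ?_)
    congr 1
    ring_nf
  rw [hprodN]
  simp only [if_true]
  ring
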